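/- Committal rate of softmax PG is at least 1: fix a ∈ [K] and θ̃_1 ∈ ℝ^K, and define the fixed-sampling softmax PG sequence θ̃_{t+1} := θ̃_t + η_t·g_a(θ̃_t) with adaptive learning rate η_t := π_{θ̃_t}(a)/(5·r(a)). Then π_{θ̃_t}(a) is non-decreasing in t, and for all t ≥ 1, t·(1 − π_{θ̃_t}(a)) ≤ 10/π_{θ̃_1}(a)². -/

import Mathlib

open Finset Real Filter

/-- Softmax policy: `π_θ(a) = exp(θ(a)) / Σ_{a'} exp(θ(a'))`. -/
noncomputable def softmax {K : ℕ} (θ : Fin K → ℝ) (a : Fin K) : ℝ :=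
  Real.exp (θ a) / ∑ a', Real.exp (θ a')

/-- On-policy IS stochastic softmax policy gradient for sampled action `a`:
`g_a(θ)(i) = 1{i = a}·r(a) − π_θ(i)·r(a)`. -/
noncomputable def stochPG {K : ℕ} (r : Fin K → ℝ) (a : Fin K) (θ : Fin K → ℝ)
    (i : Fin K) : ℝ :=
  (if i = a then r a else 0) - softmax θ i * r a

lemma softmax_pos' {K : ℕ} (θ : Fin K → ℝ) (a : Fin K) : 0 < softmax θ a := by
  have : 0 < ∑ a', Real.exp (θ a') :=
    Finset.sum_pos (fun i _ => Real.exp_pos _) ⟨a, Finset.mem_univ a⟩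
  exact div_pos (Real.exp_pos _) this

lemma softmax_le_one' {K : ℕ} (θ : Fin K → ℝ) (a : Fin K) : softmax θ a ≤ 1 := by
  have hsum : 0 < ∑ a', Real.exp (θ a') :=
    Finset.sum_pos (fun i _ => Real.exp_pos _) ⟨a, Finset.mem_univ a⟩
  rw [softmax, div_le_one hsum]
  exact Finset.single_le_sum (fun i _ => (Real.exp_pos (θ i)).le) (Finset.mem_univ a)

lemma softmax_eq' {K : ℕ} (θ : Fin K → ℝ) (a : Fin K) :
    softmax θ a = Real.exp (θ a) /
      (Real.exp (θ a) + ∑ i ∈ Finset.univ.erase a, Real.exp (θ i)) := by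
  rw [softmax, ← Finset.add_sum_erase Finset.univ (fun i => Real.exp (θ i)) (Finset.mem_univ a)]

lemma frac_step' (A B B' α : ℝ) (hA : 0 < A) (hB : 0 < B) (hB' : 0 < B') (hBB : B' ≤ B)
    (hα : α = A / (A + B) * (B / (A + B)) / 5) :
    B' / (A * Real.exp α + B') ≤
      (B / (A + B)) / (1 + (A / (A + B)) ^ 2 * (B / (A + B)) / 5) := by
  have hs : 0 < A + B := by linarith
  have hα0 : 0 ≤ α := by rw [hα]; positivity
  set E := Real.exp α with hEdef
  have hexp : 1 + α ≤ E := by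
    have := Real.add_one_le_exp α; linarith
  have hE : 0 < E := Real.exp_pos α
  have hαeq : α * (5 * (A + B) ^ 2) = A * B := by
    rw [hα]; field_simp
  have h1 : B' / (A * E + B') ≤ B / (A * E + B) := by
    rw [div_le_div_iff₀ (by positivity) (by positivity)]
    nlinarith [mul_pos hA hE]
  refine h1.trans ?_
  have hden : 0 < 1 + (A / (A + B)) ^ 2 * (B / (A + B)) / 5 := by positivity
  rw [div_le_div_iff₀ (by positivity) hden]
  have hexpand : (1 + (A / (A + B)) ^ 2 * (B / (A + B)) / 5) * (5 * (A + B) ^ 3)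
      = 5 * (A + B) ^ 3 + A ^ 2 * B := by
    field_simp
  have hs3 : (0:ℝ) < 5 * (A + B) ^ 3 := by positivity
  rw [← mul_le_mul_iff_of_pos_right hs3]
  calc B * (1 + (A / (A + B)) ^ 2 * (B / (A + B)) / 5) * (5 * (A + B) ^ 3)
      = B * (5 * (A + B) ^ 3 + A ^ 2 * B) := by rw [mul_assoc, hexpand]
    _ ≤ B / (A + B) * (A * E + B) * (5 * (A + B) ^ 3) := by
        rw [div_mul_eq_mul_div, div_mul_eq_mul_div, le_div_iff₀ hs]
        have h7 : 5*(A+B)^3*A*B*α = A^2*B^2*(A+B) := by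
          linear_combination (A*B*(A+B)) * hαeq
        have h6 : 5*A*B*(A+B)^3*(1+α) ≤ 5*A*B*(A+B)^3*E :=
          mul_le_mul_of_nonneg_left hexp (by positivity)
        nlinarith [h6, h7]

lemma step_ineq' {K : ℕ} (hK : 2 ≤ K) (r : Fin K → ℝ) {a₀ : Fin K} (hra : 0 < r a₀)
    (θc θn : Fin K → ℝ)
    (hupd : θn = fun i => θc i + (softmax θc a₀ / (5 * r a₀)) * stochPG r a₀ θc i) :
    1 - softmax θn a₀ ≤
      (1 - softmax θc a₀) / (1 + (softmax θc a₀) ^ 2 * (1 - softmax θc a₀) / 5) := by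
  classical
  set p := softmax θc a₀ with hpdef
  set A := Real.exp (θc a₀) with hAdef
  set B := ∑ i ∈ Finset.univ.erase a₀, Real.exp (θc i) with hBdef
  set B' := ∑ i ∈ Finset.univ.erase a₀, Real.exp (θn i) with hB'def
  set α := p * (1 - p) / 5 with hαdef
  have hA : 0 < A := Real.exp_pos _
  have hne : (Finset.univ.erase a₀).Nonempty := by
    rw [← Finset.card_pos, Finset.card_erase_of_mem (Finset.mem_univ a₀)]
    simp only [Finset.card_univ, Fintype.card_fin]
    omega
  have hB : 0 < B := Finset.sum_pos (fun i _ => Real.exp_pos _) hne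
  have hB' : 0 < B' := Finset.sum_pos (fun i _ => Real.exp_pos _) hne
  have hp : p = A / (A + B) := softmax_eq' θc a₀
  have hsAB : 0 < A + B := by linarith
  have h1p : 1 - p = B / (A + B) := by rw [hp]; field_simp; ring
  have hp0 : 0 < p := softmax_pos' θc a₀
  have hθa : θn a₀ = θc a₀ + α := by
    rw [hupd]
    simp only [stochPG, ↓reduceIte]
    rw [hαdef, ← hpdef]
    field_simp
  have hexpa : Real.exp (θn a₀) = A * Real.exp α := by
    rw [hθa, Real.exp_add]
  have hBB : B' ≤ B := by
    apply Finset.sum_le_sum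
    intro i hi
    apply Real.exp_le_exp.mpr
    rw [hupd]
    simp only [stochPG, if_neg (Finset.ne_of_mem_erase hi)]
    have hsi : 0 < softmax θc i := softmax_pos' θc i
    have : p / (5 * r a₀) * (0 - softmax θc i * r a₀) ≤ 0 := by
      apply mul_nonpos_of_nonneg_of_nonpos
      · positivity
      · nlinarith
    linarith
  have hsn : 1 - softmax θn a₀ = B' / (A * Real.exp α + B') := by
    rw [softmax_eq' θn a₀, hexpa, ← hB'def]
    have hpos : 0 < A * Real.exp α + B' := by positivity
    field_simp
    ring
  have hα : α = A / (A + B) * (B / (A + B)) / 5 := by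
    rw [hαdef, hp]; rw [hp] at h1p; rw [h1p]
  rw [hsn, h1p, hp]
  exact frac_step' A B B' α hA hB hB' hBB hα

lemma contraction' (q p δ δ' : ℝ) (hq0 : 0 < q) (hqp : q ≤ p) (hp1 : p ≤ 1)
    (hδ0 : 0 ≤ δ) (hδ1 : δ ≤ 1)
    (h : δ' ≤ δ / (1 + p ^ 2 * δ / 5)) :
    δ' ≤ δ - q ^ 2 * δ ^ 2 / 6 := by
  have hq1 : q ≤ 1 := hqp.trans hp1
  have hd1 : (0:ℝ) < 1 + q ^ 2 * δ / 5 := by positivity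
  have hd2 : (0:ℝ) < 1 + p ^ 2 * δ / 5 := by nlinarith
  have h2 : δ / (1 + p ^ 2 * δ / 5) ≤ δ / (1 + q ^ 2 * δ / 5) := by
    gcongr
  have hq2δ : q ^ 2 * δ ≤ 1 := by nlinarith
  have h3 : δ / (1 + q ^ 2 * δ / 5) ≤ δ - q ^ 2 * δ ^ 2 / 6 := by
    rw [div_le_iff₀ hd1]
    nlinarith [mul_nonneg (mul_nonneg (sq_nonneg q) (sq_nonneg δ)) (sub_nonneg.mpr hq2δ)]
  linarith

lemma ind_step' (q d D T : ℝ) (hq0 : 0 < q) (hq1 : q ≤ 1)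
    (hd0 : 0 ≤ d) (hd1 : d ≤ 1) (hD0 : 0 ≤ D) (hT : 9 ≤ T)
    (hrec : D ≤ d - q ^ 2 * d ^ 2 / 6)
    (hih : (T + 1) * d ≤ 10 / q ^ 2) :
    (T + 2) * D ≤ 10 / q ^ 2 := by
  have hT1 : (0:ℝ) < T + 1 := by linarith
  set u := 10 / (q ^ 2 * (T + 1)) with hu
  have hu0 : 0 < u := by positivity
  have hdu : d ≤ u := by
    rw [hu, ← div_div]
    rw [le_div_iff₀ hT1]
    linarith [hih]
  have huq : q ^ 2 * u = 10 / (T + 1) := by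
    rw [hu]; field_simp
  have huq1 : q ^ 2 * u ≤ 1 := by
    rw [huq, div_le_one hT1]; linarith
  have h3 : d - q ^ 2 * d ^ 2 / 6 ≤ u - q ^ 2 * u ^ 2 / 6 := by
    nlinarith [mul_nonneg (sub_nonneg.mpr hdu)
      (by nlinarith : (0:ℝ) ≤ 6 - q ^ 2 * (u + d))]
  have h4 : (T + 2) * (u - q ^ 2 * u ^ 2 / 6) ≤ 10 / q ^ 2 := by
    have hq2 : (0:ℝ) < q ^ 2 := by positivity
    rw [hu]
    have expand : (T+2)*(10/(q^2*(T+1)) - q^2*(10/(q^2*(T+1)))^2/6)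
        = (10*(T+2)*(6*(T+1)-10))/(6*q^2*(T+1)^2) := by
      field_simp
    rw [expand, div_le_div_iff₀ (by positivity) hq2]
    nlinarith [mul_pos hT1 hT1, sq_nonneg q]
  calc (T + 2) * D ≤ (T + 2) * (d - q ^ 2 * d ^ 2 / 6) := by nlinarith
    _ ≤ (T + 2) * (u - q ^ 2 * u ^ 2 / 6) := by nlinarith
    _ ≤ 10 / q ^ 2 := h4

/-- Committal rate of softmax PG is at least 1: for the fixed-sampling sequence
`θ_{t+1} = θ_t + η_t·g_a(θ_t)` with adaptive learning rate
`η_t = π_{θ_t}(a)/(5·r(a))`, the probability `π_{θ_t}(a)` is non-decreasing and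
`t·(1 − π_{θ_t}(a)) ≤ 10/π_{θ_1}(a)²` for all `t ≥ 1`.  (Here `θ 0` is the
paper's `θ_1`, so the factor `t` becomes `t + 1`.) -/
theorem committal_rate_softmax_pg_ge_one
    {K : ℕ} (hK : 2 ≤ K) (r : Fin K → ℝ)
    (hr : ∀ a, 0 < r a ∧ r a ≤ 1)
    (a : Fin K) (θ : ℕ → Fin K → ℝ)
    (hupd : ∀ t, θ (t + 1) = fun i =>
      θ t i + (softmax (θ t) a / (5 * r a)) * stochPG r a (θ t) i) :
    (∀ t, softmax (θ t) a ≤ softmax (θ (t + 1)) a) ∧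
    ∀ t : ℕ, ((t : ℝ) + 1) * (1 - softmax (θ t) a) ≤ 10 / softmax (θ 0) a ^ 2 := by
  have hra := (hr a).1
  have hstep : ∀ t, 1 - softmax (θ (t+1)) a ≤
      (1 - softmax (θ t) a) / (1 + (softmax (θ t) a) ^ 2 * (1 - softmax (θ t) a) / 5) :=
    fun t => step_ineq' hK r hra (θ t) (θ (t+1)) (hupd t)
  have hp0 : ∀ t, 0 < softmax (θ t) a := fun t => softmax_pos' _ a
  have hp1 : ∀ t, softmax (θ t) a ≤ 1 := fun t => softmax_le_one' _ a
  have hmono : ∀ t, softmax (θ t) a ≤ softmax (θ (t+1)) a := by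
    intro t
    have h := hstep t
    have hden : 1 ≤ 1 + (softmax (θ t) a) ^ 2 * (1 - softmax (θ t) a) / 5 := by
      nlinarith [hp0 t, hp1 t]
    have := div_le_self (show (0:ℝ) ≤ 1 - softmax (θ t) a by linarith [hp1 t]) hden
    linarith
  refine ⟨hmono, ?_⟩
  set q := softmax (θ 0) a with hq
  have hq0 : 0 < q := hp0 0
  have hq1 : q ≤ 1 := hp1 0
  have hqle : ∀ t, q ≤ softmax (θ t) a := by
    intro t
    induction t with
    | zero => exact le_refl q
    | succ n ih => exact ih.trans (hmono n)
  have hrec : ∀ t, 1 - softmax (θ (t+1)) a ≤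
      (1 - softmax (θ t) a) - q ^ 2 * (1 - softmax (θ t) a) ^ 2 / 6 :=
    fun t => contraction' q _ _ _ hq0 (hqle t) (hp1 t)
      (by linarith [hp1 t]) (by linarith [hp0 t]) (hstep t)
  have hM : (10:ℝ) ≤ 10 / q ^ 2 := by
    rw [le_div_iff₀ (by positivity)]; nlinarith
  intro t
  induction t with
  | zero =>
    push_cast
    have := hp0 0
    nlinarith
  | succ n ih =>
    by_cases hn : n < 9
    · have hcast : ((n:ℝ) + 1 + 1) ≤ 10 := by
        have : (n:ℝ) ≤ 8 := by exact_mod_cast Nat.le_of_lt_succ hn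
        linarith
      push_cast
      nlinarith [hp0 (n+1), hp1 (n+1)]
    · push_neg at hn
      have hT : (9:ℝ) ≤ (n:ℝ) := by exact_mod_cast hn
      have hmain := ind_step' q (1 - softmax (θ n) a) (1 - softmax (θ (n+1)) a) (n:ℝ)
        hq0 hq1 (by linarith [hp1 n]) (by linarith [hp0 n]) (by linarith [hp1 (n+1)])
        hT (hrec n) ih
      push_cast
      linarith
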